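/- Trust region strong duality (Moré–Sorensen conditions): x* is a global minimizer of ½ xᵀAx − fᵀx subject to xᵀx ≤ δ² if there exists λ* ≥ 0 such that (A + λ*I)x* = f, A + λ*I is positive semidefinite, x*ᵀx* ≤ δ², and λ*(x*ᵀx* − δ²) = 0. -/

import Mathlib

open Matrix

/-- Moré–Sorensen conditions for the trust region problem: if `λ* ≥ 0`,
`(A + λ*I) x* = f`, `A + λ*I` is positive semidefinite, `x*ᵀx* ≤ δ²` and
`λ* (x*ᵀx* − δ²) = 0`, then `x*` is a global minimizer of
`½ xᵀAx − fᵀx` over `{x : xᵀx ≤ δ²}`. -/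
theorem trust_region_strong_duality
    (n : ℕ)
    (A : Matrix (Fin n) (Fin n) ℝ) (hAsymm : A.IsSymm)
    (f : Fin n → ℝ) (δ : ℝ) (hδ : 0 < δ)
    (xstar : Fin n → ℝ) (lamstar : ℝ)
    (hlam : 0 ≤ lamstar)
    (hstat : (A + lamstar • (1 : Matrix (Fin n) (Fin n) ℝ)).mulVec xstar = f)
    (hpsd : (A + lamstar • (1 : Matrix (Fin n) (Fin n) ℝ)).PosSemidef)
    (hfeas : xstar ⬝ᵥ xstar ≤ δ ^ 2)
    (hcs : lamstar * (xstar ⬝ᵥ xstar - δ ^ 2) = 0) :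
    ∀ x : Fin n → ℝ, x ⬝ᵥ x ≤ δ ^ 2 →
      (1 / 2) * (xstar ⬝ᵥ A.mulVec xstar) - f ⬝ᵥ xstar
        ≤ (1 / 2) * (x ⬝ᵥ A.mulVec x) - f ⬝ᵥ x := by
  intro x hx
  set B := A + lamstar • (1 : Matrix (Fin n) (Fin n) ℝ) with hB
  have hBsymm : B.IsSymm := by
    unfold Matrix.IsSymm
    rw [hB, Matrix.transpose_add, Matrix.transpose_smul, Matrix.transpose_one, hAsymm.eq]
  have hsym : ∀ u v : Fin n → ℝ, u ⬝ᵥ B.mulVec v = v ⬝ᵥ B.mulVec u := by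
    intro u v
    rw [dotProduct_mulVec, dotProduct_mulVec, ← Matrix.mulVec_transpose, hBsymm.eq,
      dotProduct_comm, dotProduct_mulVec]
  have hpos : 0 ≤ (x - xstar) ⬝ᵥ B.mulVec (x - xstar) := by
    have := hpsd.dotProduct_mulVec_nonneg (x - xstar)
    simpa using this
  -- expand B.mulVec
  have hBmul : ∀ u : Fin n → ℝ, B.mulVec u = A.mulVec u + lamstar • u := by
    intro u
    rw [hB, Matrix.add_mulVec, Matrix.smul_mulVec, Matrix.one_mulVec]
  have hexp : (x - xstar) ⬝ᵥ B.mulVec (x - xstar)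
      = x ⬝ᵥ B.mulVec x - 2 * (x ⬝ᵥ B.mulVec xstar) + xstar ⬝ᵥ B.mulVec xstar := by
    have h1 : B.mulVec (x - xstar) = B.mulVec x - B.mulVec xstar := by
      rw [Matrix.mulVec_sub]
    rw [h1, sub_dotProduct, dotProduct_sub, dotProduct_sub, hsym xstar x]
    ring
  have hfx : f ⬝ᵥ x = x ⬝ᵥ B.mulVec xstar := by
    rw [← hstat, dotProduct_comm]
  have hfxs : f ⬝ᵥ xstar = xstar ⬝ᵥ B.mulVec xstar := by
    rw [← hstat, dotProduct_comm]
  have hxB : x ⬝ᵥ B.mulVec x = x ⬝ᵥ A.mulVec x + lamstar * (x ⬝ᵥ x) := by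
    rw [hBmul, dotProduct_add, dotProduct_smul, smul_eq_mul]
  have hxsB : xstar ⬝ᵥ B.mulVec xstar = xstar ⬝ᵥ A.mulVec xstar + lamstar * (xstar ⬝ᵥ xstar) := by
    rw [hBmul, dotProduct_add, dotProduct_smul, smul_eq_mul]
  have hmono : lamstar * (x ⬝ᵥ x) ≤ lamstar * (δ ^ 2) :=
    mul_le_mul_of_nonneg_left hx hlam
  nlinarith [hpos, hexp, hfx, hfxs, hxB, hxsB, hmono, hcs]
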